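/- For every monotone f : M → L with M a finite rooted poset, ev_f is the unique Heyting algebra homomorphism g : S(h_L) → D(M) with g ∘ ι_L = D(f). -/

import Mathlib

/-- A finite rooted poset: a finite partial order with a greatest element (the root). -/
structure FRP : Type 1 where
  carrier : Type
  [po : PartialOrder carrier]
  [fin : Finite carrier]
  root : carrier
  le_root : ∀ x : carrier, x ≤ root

attribute [instance] FRP.po FRP.fin

/-- The downset of a point, as a finite rooted poset. -/
def FRP.down (P : FRP) (p : P.carrier) : FRP where
  carrier := {x : P.carrier // x ≤ p}
  root := ⟨p, le_refl p⟩
  le_root := fun x => x.2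

/-- An `L`-evaluation: a monotone map from a finite rooted poset into `L`. -/
structure Eval (L : Type) [PartialOrder L] : Type 1 where
  P : FRP
  map : P.carrier → L
  mono : Monotone map

variable {L : Type} [PartialOrder L]

/-- Restriction of an evaluation to the downset of a point. -/
def Eval.restrict (u : Eval L) (p : u.P.carrier) : Eval L where
  P := u.P.down p
  map := fun x => u.map x.1
  mono := fun _ _ h => u.mono h

/-- The value of an evaluation at the root of its domain. -/
def Eval.rootVal (u : Eval L) : L := u.map u.P.root

/-- The relations `∼ₙ` on `L`-evaluations. -/
def sim (L : Type) [PartialOrder L] : ℕ → Eval L → Eval L → Prop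
  | 0 => fun u v => u.rootVal = v.rootVal
  | n+1 => fun u v =>
      (∀ p, ∃ q, sim L n (u.restrict p) (v.restrict q)) ∧
      (∀ q, ∃ p, sim L n (v.restrict q) (u.restrict p))

/-- The relations `≤ₙ`: `lev L n v u` means `v ≤ₙ u`. -/
def lev (L : Type) [PartialOrder L] : ℕ → Eval L → Eval L → Prop
  | 0 => fun v u => v.rootVal ≤ u.rootVal
  | n+1 => fun v u => ∀ q, ∃ p, sim L n (v.restrict q) (u.restrict p)

/-- `S` is a subpresheaf of `h_L`: closed under restriction. -/
def IsSub (L : Type) [PartialOrder L] (S : Set (Eval L)) : Prop :=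
  ∀ u ∈ S, ∀ p, u.restrict p ∈ S

/-- `S` has b-index `n`: closed under `∼ₙ`. -/
def BIndex (L : Type) [PartialOrder L] (n : ℕ) (S : Set (Eval L)) : Prop :=
  ∀ u ∈ S, ∀ v, sim L n u v → v ∈ S

/-- `S` has b≤-index `n`: closed under being `≤ₙ`-below a member. -/
def BleIndex (L : Type) [PartialOrder L] (n : ℕ) (S : Set (Eval L)) : Prop :=
  ∀ u ∈ S, ∀ v, lev L n v u → v ∈ S

/-- `↓ₙ u`. -/
def downSet (L : Type) [PartialOrder L] (n : ℕ) (u : Eval L) : Set (Eval L) :=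
  {v | lev L n v u}

/-- Pointwise description of Heyting implication of subpresheaves. -/
def himpPt (L : Type) [PartialOrder L] (S T : Set (Eval L)) : Set (Eval L) :=
  {u | ∀ p, u.restrict p ∈ S → u.restrict p ∈ T}

/-- The embedding of downward closed subsets of `L` into subpresheaves. -/
def iota (L : Type) [PartialOrder L] (d : Set L) : Set (Eval L) :=
  {u | u.rootVal ∈ d}

/-- Membership in the Heyting algebra `S(h_L)`: subpresheaves with a b-index. -/
def InS (L : Type) [PartialOrder L] (S : Set (Eval L)) : Prop :=
  IsSub L S ∧ ∃ n, BIndex L n S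

/-- `ev_f`. -/
def evalMap (L : Type) [PartialOrder L] (f : Eval L) (X : Set (Eval L)) : Set f.P.carrier :=
  {p | f.restrict p ∈ X}

/-- Heyting implication of downward closed subsets of a poset. -/
def himpD {M : Type} [PartialOrder M] (a b : Set M) : Set M :=
  {p | ∀ q ≤ p, q ∈ a → q ∈ b}

section Aux
variable {L : Type} [PartialOrder L]

lemma rootVal_restrict (u : Eval L) (p : u.P.carrier) :
    (u.restrict p).rootVal = u.map p := rfl

lemma sim_symm : ∀ n {u v : Eval L}, sim L n u v → sim L n v u
  | 0, _, _, h => h.symm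
  | _+1, _, _, h => ⟨h.2, h.1⟩

lemma sim_iff_lev {n : ℕ} {u v : Eval L} :
    sim L n u v ↔ lev L n u v ∧ lev L n v u := by
  cases n with
  | zero =>
    exact ⟨fun h => ⟨le_of_eq h, le_of_eq h.symm⟩, fun h => le_antisymm h.1 h.2⟩
  | succ n => exact Iff.rfl

lemma step_mono : ∀ n : ℕ, (∀ u v : Eval L, sim L (n+1) u v → sim L n u v) ∧
    (∀ u v : Eval L, lev L (n+1) u v → lev L n u v) := by
  intro n
  induction n with
  | zero =>
    constructor
    · intro u v h
      rcases sim_iff_lev.mp h with ⟨h1, h2⟩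
      rcases h1 u.P.root with ⟨p, hp⟩
      rcases h2 v.P.root with ⟨q, hq⟩
      exact le_antisymm (le_trans (le_of_eq hp) (v.mono (v.P.le_root p)))
        (le_trans (le_of_eq hq) (u.mono (u.P.le_root q)))
    · intro u v h
      rcases h u.P.root with ⟨p, hp⟩
      exact le_trans (le_of_eq hp) (v.mono (v.P.le_root p))
  | succ n ih =>
    constructor
    · intro u v h
      exact ⟨fun p => (h.1 p).imp (fun q hq => ih.1 _ _ hq),
             fun q => (h.2 q).imp (fun p hp => ih.1 _ _ hp)⟩
    · intro u v h
      intro q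
      exact (h q).imp (fun p hp => ih.1 _ _ hp)

lemma sim_of_le {m n : ℕ} (h : m ≤ n) {u v : Eval L} (hs : sim L n u v) :
    sim L m u v := by
  induction n with
  | zero => exact (Nat.le_zero.mp h) ▸ hs
  | succ n ih =>
    rcases Nat.lt_or_ge m (n+1) with h' | h'
    · exact ih (Nat.lt_succ_iff.mp h') ((step_mono n).1 _ _ hs)
    · exact (le_antisymm h h') ▸ hs

lemma sim_refl : ∀ n (u : Eval L), sim L n u u
  | 0, _ => rfl
  | n+1, u => ⟨fun p => ⟨p, sim_refl n _⟩, fun p => ⟨p, sim_refl n _⟩⟩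

lemma lev_refl (n : ℕ) (u : Eval L) : lev L n u u :=
  (sim_iff_lev.mp (sim_refl n u)).1

lemma lev_trans : ∀ n {a b c : Eval L}, lev L n a b → lev L n b c → lev L n a c
  | 0, _, _, _, h1, h2 => le_trans h1 h2
  | n+1, a, b, c, h1, h2 => by
    intro q
    rcases h1 q with ⟨p, hp⟩
    rcases h2 p with ⟨r, hr⟩
    rcases sim_iff_lev.mp hp with ⟨hp1, hp2⟩
    rcases sim_iff_lev.mp hr with ⟨hr1, hr2⟩
    exact ⟨r, sim_iff_lev.mpr ⟨lev_trans n hp1 hr1, lev_trans n hr2 hp2⟩⟩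

lemma sim_trans {n : ℕ} {a b c : Eval L} (h1 : sim L n a b) (h2 : sim L n b c) :
    sim L n a c := by
  rcases sim_iff_lev.mp h1 with ⟨h11, h12⟩
  rcases sim_iff_lev.mp h2 with ⟨h21, h22⟩
  exact sim_iff_lev.mpr ⟨lev_trans n h11 h21, lev_trans n h22 h12⟩

/-- Isomorphism of evaluations. -/
def IsoEval (u v : Eval L) : Prop :=
  ∃ e : u.P.carrier ≃o v.P.carrier, ∀ x, v.map (e x) = u.map x

lemma IsoEval.symm {u v : Eval L} (h : IsoEval u v) : IsoEval v u := by
  obtain ⟨e, he⟩ := h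
  refine ⟨e.symm, fun y => ?_⟩
  rw [← he (e.symm y), e.apply_symm_apply]

lemma IsoEval.sim : ∀ (n : ℕ) {u v : Eval L}, IsoEval u v → sim L n u v := by
  intro n
  induction n with
  | zero =>
    rintro u v ⟨e, he⟩
    have hroot : e u.P.root = v.P.root := by
      refine le_antisymm (v.P.le_root _) ?_
      calc v.P.root = e (e.symm v.P.root) := (e.apply_symm_apply _).symm
        _ ≤ e u.P.root := e.le_iff_le.mpr (u.P.le_root _)
    show u.rootVal = v.rootVal
    rw [Eval.rootVal, Eval.rootVal, ← hroot, he]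
  | succ n ih =>
    rintro u v h
    obtain ⟨e, he⟩ := h
    have hrest : ∀ p : u.P.carrier, IsoEval (u.restrict p) (v.restrict (e p)) := by
      intro p
      refine ⟨⟨⟨fun x => ⟨e x.1, e.le_iff_le.mpr x.2⟩,
        fun y => ⟨e.symm y.1, by
          have h1 : e.symm y.1 ≤ e.symm (e p) := e.symm.le_iff_le.mpr y.2
          rwa [e.symm_apply_apply] at h1⟩,
        fun x => Subtype.ext (e.symm_apply_apply _),
        fun y => Subtype.ext (e.apply_symm_apply _)⟩, ?_⟩, fun x => he x.1⟩
      rintro ⟨a, ha⟩ ⟨b, hb⟩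
      exact e.le_iff_le
    constructor
    · intro p
      exact ⟨e p, ih (hrest p)⟩
    · intro q
      have h2 := hrest (e.symm q)
      rw [e.apply_symm_apply] at h2
      exact ⟨e.symm q, ih h2.symm⟩

lemma isoRestrictRoot (u : Eval L) : IsoEval u (u.restrict u.P.root) := by
  refine ⟨⟨⟨fun x => ⟨x, u.P.le_root x⟩, fun y => y.1, fun x => rfl, fun y => rfl⟩, ?_⟩,
    fun x => rfl⟩
  intro a b
  exact Iff.rfl

lemma isoRestrictRestrict (u : Eval L) (p : u.P.carrier)
    (q : (u.restrict p).P.carrier) :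
    IsoEval ((u.restrict p).restrict q) (u.restrict q.1) := by
  refine ⟨⟨⟨fun x => ⟨x.1.1, x.2⟩, fun y => ⟨⟨y.1, le_trans y.2 q.2⟩, y.2⟩,
    fun x => rfl, fun y => rfl⟩, ?_⟩, fun x => rfl⟩
  intro a b
  exact Iff.rfl

lemma lev_restrict_self : ∀ (n : ℕ) (u : Eval L) (p : u.P.carrier),
    lev L n (u.restrict p) u := by
  intro n u p
  cases n with
  | zero => exact u.mono (u.P.le_root p)
  | succ n =>
    intro q
    exact ⟨q.1, (isoRestrictRestrict u p q).sim n⟩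

end Aux
section Aux2
variable {L : Type} [PartialOrder L]

/-- Complement of the `≤ₙ`-upset of `u`. -/
def upCo (L : Type) [PartialOrder L] (n : ℕ) (u : Eval L) : Set (Eval L) :=
  {v | ¬ lev L n u v}

lemma BIndex_mono {m n : ℕ} (h : m ≤ n) {S : Set (Eval L)}
    (hb : BIndex L m S) : BIndex L n S :=
  fun u hu v hs => hb u hu v (sim_of_le h hs)

lemma mem_of_iso {S : Set (Eval L)} (hS : InS L S) {u v : Eval L}
    (hu : u ∈ S) (h : IsoEval u v) : v ∈ S := by
  obtain ⟨-, n, hb⟩ := hS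
  exact hb u hu v (h.sim n)

lemma InS_downSet (n : ℕ) (u : Eval L) : InS L (downSet L n u) := by
  refine ⟨fun v hv p => lev_trans n (lev_restrict_self n v p) hv, n, ?_⟩
  intro v hv w hs
  exact lev_trans n (sim_iff_lev.mp (sim_symm _ hs)).1 hv

lemma InS_upCo (n : ℕ) (u : Eval L) : InS L (upCo L n u) := by
  refine ⟨fun v hv p hle => hv (lev_trans n hle (lev_restrict_self n v p)), n, ?_⟩
  intro v hv w hs hle
  exact hv (lev_trans n hle (sim_iff_lev.mp (sim_symm _ hs)).1)

lemma InS_iota {d : Set L} (hd : IsLowerSet d) : InS L (iota L d) := by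
  refine ⟨fun u hu p => hd (u.mono (u.P.le_root p)) hu, 0, ?_⟩
  intro u hu v hs
  show v.rootVal ∈ d
  rw [← hs]
  exact hu

lemma iota_empty : iota L (∅ : Set L) = ∅ := by
  ext u; simp [iota]

lemma iota_univ : iota L (Set.univ : Set L) = Set.univ := by
  ext u; simp [iota]

lemma InS_empty : InS L (∅ : Set (Eval L)) :=
  iota_empty (L := L) ▸ InS_iota (fun _ _ _ h => h)

lemma InS_univ : InS L (Set.univ : Set (Eval L)) :=
  iota_univ (L := L) ▸ InS_iota (fun _ _ _ _ => trivial)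

lemma InS_inter {S T : Set (Eval L)} (hS : InS L S) (hT : InS L T) :
    InS L (S ∩ T) := by
  obtain ⟨hS1, nS, hS2⟩ := hS
  obtain ⟨hT1, nT, hT2⟩ := hT
  refine ⟨fun u hu p => ⟨hS1 u hu.1 p, hT1 u hu.2 p⟩, max nS nT, ?_⟩
  intro u hu v hs
  exact ⟨BIndex_mono (le_max_left _ _) hS2 u hu.1 v hs,
    BIndex_mono (le_max_right _ _) hT2 u hu.2 v hs⟩

lemma InS_union {S T : Set (Eval L)} (hS : InS L S) (hT : InS L T) :
    InS L (S ∪ T) := by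
  obtain ⟨hS1, nS, hS2⟩ := hS
  obtain ⟨hT1, nT, hT2⟩ := hT
  refine ⟨fun u hu p => hu.imp (fun h => hS1 u h p) (fun h => hT1 u h p),
    max nS nT, ?_⟩
  intro u hu v hs
  exact hu.imp (fun h => BIndex_mono (le_max_left _ _) hS2 u h v hs)
    (fun h => BIndex_mono (le_max_right _ _) hT2 u h v hs)

lemma InS_himp {S T : Set (Eval L)} (hS : InS L S) (hT : InS L T) :
    InS L (himpPt L S T) := by
  obtain ⟨hS1, nS, hS2⟩ := hS
  obtain ⟨hT1, nT, hT2⟩ := hT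
  constructor
  · intro u hu p q hq
    have h1 : u.restrict q.1 ∈ S :=
      hS2 _ hq _ ((isoRestrictRestrict u p q).sim nS)
    have h2 : u.restrict q.1 ∈ T := hu q.1 h1
    exact hT2 _ h2 _ ((isoRestrictRestrict u p q).symm.sim nT)
  · refine ⟨max nS nT + 1, ?_⟩
    intro u hu v hs q hq
    rcases hs.2 q with ⟨p, hp⟩
    have h1 : u.restrict p ∈ S :=
      BIndex_mono (le_max_left nS nT) hS2 _ hq _ hp
    have h2 : u.restrict p ∈ T := hu p h1
    exact BIndex_mono (le_max_right nS nT) hT2 _ h2 _ (sim_symm _ hp)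

lemma InS_sUnion {𝒮 : Set (Set (Eval L))} (hfin : 𝒮.Finite)
    (h : ∀ S ∈ 𝒮, InS L S) : InS L (⋃₀ 𝒮) := by
  refine Set.Finite.induction_on
    (motive := fun s _ => (∀ S ∈ s, InS L S) → InS L (⋃₀ s)) 𝒮 hfin
    (fun _ => by simpa using InS_empty) ?_ h
  intro a s _ _ ih h'
  rw [Set.sUnion_insert]
  exact InS_union (h' _ (Set.mem_insert _ _))
    (ih (fun S hS => h' S (Set.mem_insert_of_mem _ hS)))

lemma InS_sInter {𝒮 : Set (Set (Eval L))} (hfin : 𝒮.Finite)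
    (h : ∀ S ∈ 𝒮, InS L S) : InS L (⋂₀ 𝒮) := by
  refine Set.Finite.induction_on
    (motive := fun s _ => (∀ S ∈ s, InS L S) → InS L (⋂₀ s)) 𝒮 hfin
    (fun _ => by simpa using InS_univ) ?_ h
  intro a s _ _ ih h'
  rw [Set.sInter_insert]
  exact InS_inter (h' _ (Set.mem_insert _ _))
    (ih (fun S hS => h' S (Set.mem_insert_of_mem _ hS)))

lemma InS_iUnion {ι : Type} [Finite ι] (F : ι → Set (Eval L))
    (h : ∀ i, InS L (F i)) : InS L (⋃ i, F i) := by
  rw [← Set.sUnion_range]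
  exact InS_sUnion (Set.finite_range F) (by rintro S ⟨i, rfl⟩; exact h i)

lemma InS_iInter {ι : Type} [Finite ι] (F : ι → Set (Eval L))
    (h : ∀ i, InS L (F i)) : InS L (⋂ i, F i) := by
  rw [← Set.sInter_range]
  exact InS_sInter (Set.finite_range F) (by rintro S ⟨i, rfl⟩; exact h i)

lemma InS_biUnion {ι : Type} [Finite ι] (s : Set ι) (F : ι → Set (Eval L))
    (h : ∀ i, InS L (F i)) : InS L (⋃ i ∈ s, F i) := by
  rw [Set.biUnion_eq_iUnion]
  exact InS_iUnion _ (fun i => h i.1)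

lemma InS_biInter {ι : Type} [Finite ι] (s : Set ι) (F : ι → Set (Eval L))
    (h : ∀ i, InS L (F i)) : InS L (⋂ i ∈ s, F i) := by
  rw [Set.biInter_eq_iInter]
  exact InS_iInter _ (fun i => h i.1)

end Aux2
section Aux3
variable {L : Type} [PartialOrder L]

lemma downSet_zero_eq (u : Eval L) :
    downSet L 0 u = iota L {b | b ≤ u.rootVal} := rfl

lemma upCo_zero_eq (u : Eval L) :
    upCo L 0 u = iota L {b | ¬ u.rootVal ≤ b} := rfl

lemma downSet_succ_eq (n : ℕ) (u : Eval L) :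
    downSet L (n+1) u =
      ⋂ S : Set u.P.carrier,
        himpPt L (⋂ p ∈ S, upCo L n (u.restrict p))
          (⋃ p ∈ Sᶜ, downSet L n (u.restrict p)) := by
  ext v
  simp only [downSet, upCo, himpPt, Set.mem_iInter, Set.mem_iUnion, Set.mem_setOf_eq,
    Set.mem_compl_iff]
  constructor
  · intro h S q hq
    obtain ⟨p, hp⟩ := h q
    rcases sim_iff_lev.mp hp with ⟨h1, h2⟩
    refine ⟨p, fun hpS => (hq p hpS) h2, h1⟩
  · intro h q
    obtain ⟨p, hp1, hp2⟩ :=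
      h {p | ¬ lev L n (u.restrict p) (v.restrict q)} q (fun p hp => hp)
    exact ⟨p, sim_iff_lev.mpr ⟨hp2, not_not.mp hp1⟩⟩

lemma upCo_succ_eq (n : ℕ) (u : Eval L) :
    upCo L (n+1) u =
      ⋃ p, himpPt L (downSet L n (u.restrict p)) (upCo L n (u.restrict p)) := by
  ext v
  simp only [upCo, downSet, himpPt, Set.mem_iUnion, Set.mem_setOf_eq]
  constructor
  · intro h
    rcases not_forall.mp h with ⟨p, hp⟩
    refine ⟨p, fun q hq1 hq2 => hp ⟨q, sim_iff_lev.mpr ⟨hq2, hq1⟩⟩⟩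
  · rintro ⟨p, hp⟩ hlev
    obtain ⟨q, hq⟩ := hlev p
    rcases sim_iff_lev.mp hq with ⟨h1, h2⟩
    exact hp q h2 h1

/- evalMap is a homomorphism -/
lemma evalMap_iota (f : Eval L) (d : Set L) :
    evalMap L f (iota L d) = f.map ⁻¹' d := rfl

lemma evalMap_inter (f : Eval L) (S T : Set (Eval L)) :
    evalMap L f (S ∩ T) = evalMap L f S ∩ evalMap L f T := rfl

lemma evalMap_union (f : Eval L) (S T : Set (Eval L)) :
    evalMap L f (S ∪ T) = evalMap L f S ∪ evalMap L f T := rfl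

lemma evalMap_sUnion (f : Eval L) (𝒮 : Set (Set (Eval L))) :
    evalMap L f (⋃₀ 𝒮) = ⋃₀ ((evalMap L f) '' 𝒮) := by
  ext p
  simp [evalMap, Set.mem_sUnion]

lemma evalMap_iUnion {ι : Type} (f : Eval L) (F : ι → Set (Eval L)) :
    evalMap L f (⋃ i, F i) = ⋃ i, evalMap L f (F i) := by
  ext p; simp [evalMap]

lemma evalMap_iInter {ι : Type} (f : Eval L) (F : ι → Set (Eval L)) :
    evalMap L f (⋂ i, F i) = ⋂ i, evalMap L f (F i) := by
  ext p; simp [evalMap]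

lemma evalMap_biUnion {ι : Type} (f : Eval L) (s : Set ι) (F : ι → Set (Eval L)) :
    evalMap L f (⋃ i ∈ s, F i) = ⋃ i ∈ s, evalMap L f (F i) := by
  ext p; simp [evalMap]

lemma evalMap_biInter {ι : Type} (f : Eval L) (s : Set ι) (F : ι → Set (Eval L)) :
    evalMap L f (⋂ i ∈ s, F i) = ⋂ i ∈ s, evalMap L f (F i) := by
  ext p; simp [evalMap]

lemma evalMap_himp (f : Eval L) {S T : Set (Eval L)} (hS : InS L S) (hT : InS L T) :
    evalMap L f (himpPt L S T) = himpD (evalMap L f S) (evalMap L f T) := by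
  ext p
  simp only [evalMap, himpPt, himpD, Set.mem_setOf_eq]
  constructor
  · intro h q hq hqS
    have h1 : (f.restrict p).restrict ⟨q, hq⟩ ∈ S :=
      mem_of_iso hS hqS (isoRestrictRestrict f p ⟨q, hq⟩).symm
    exact mem_of_iso hT (h ⟨q, hq⟩ h1) (isoRestrictRestrict f p ⟨q, hq⟩)
  · intro h q hq
    have h1 : f.restrict q.1 ∈ S :=
      mem_of_iso hS hq (isoRestrictRestrict f p q)
    exact mem_of_iso hT (h q.1 q.2 h1) (isoRestrictRestrict f p q).symm

end Aux3
section Aux4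
variable {L : Type} [PartialOrder L] {f : Eval L}
variable {g : Set (Eval L) → Set f.P.carrier}

lemma g_empty (hgι : ∀ d : Set L, IsLowerSet d → g (iota L d) = f.map ⁻¹' d) :
    g ∅ = ∅ := by
  have hl : IsLowerSet (∅ : Set L) := fun _ _ _ h => h
  rw [← iota_empty (L := L), hgι _ hl]
  simp

lemma g_univ (hgι : ∀ d : Set L, IsLowerSet d → g (iota L d) = f.map ⁻¹' d) :
    g Set.univ = Set.univ := by
  have hl : IsLowerSet (Set.univ : Set L) := fun _ _ _ _ => trivial
  rw [← iota_univ (L := L), hgι _ hl]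
  simp

lemma g_sUnion
    (hg_union : ∀ S T : Set (Eval L), InS L S → InS L T → g (S ∪ T) = g S ∪ g T)
    (h0 : g ∅ = ∅) {𝒮 : Set (Set (Eval L))} (hfin : 𝒮.Finite)
    (h : ∀ S ∈ 𝒮, InS L S) : g (⋃₀ 𝒮) = ⋃₀ (g '' 𝒮) := by
  refine Set.Finite.induction_on
    (motive := fun s _ => (∀ S ∈ s, InS L S) → g (⋃₀ s) = ⋃₀ (g '' s)) 𝒮 hfin
    (fun _ => by simpa using h0) ?_ h
  intro a s _ hsfin ih h'
  rw [Set.sUnion_insert, hg_union _ _ (h' _ (Set.mem_insert _ _))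
      (InS_sUnion hsfin (fun S hS => h' S (Set.mem_insert_of_mem _ hS))),
    ih (fun S hS => h' S (Set.mem_insert_of_mem _ hS)),
    Set.image_insert_eq, Set.sUnion_insert]

lemma g_sInter
    (hg_inter : ∀ S T : Set (Eval L), InS L S → InS L T → g (S ∩ T) = g S ∩ g T)
    (h1 : g Set.univ = Set.univ) {𝒮 : Set (Set (Eval L))} (hfin : 𝒮.Finite)
    (h : ∀ S ∈ 𝒮, InS L S) : g (⋂₀ 𝒮) = ⋂₀ (g '' 𝒮) := by
  refine Set.Finite.induction_on
    (motive := fun s _ => (∀ S ∈ s, InS L S) → g (⋂₀ s) = ⋂₀ (g '' s)) 𝒮 hfin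
    (fun _ => by simpa using h1) ?_ h
  intro a s _ hsfin ih h'
  rw [Set.sInter_insert, hg_inter _ _ (h' _ (Set.mem_insert _ _))
      (InS_sInter hsfin (fun S hS => h' S (Set.mem_insert_of_mem _ hS))),
    ih (fun S hS => h' S (Set.mem_insert_of_mem _ hS)),
    Set.image_insert_eq, Set.sInter_insert]

lemma g_iUnion
    (hg_union : ∀ S T : Set (Eval L), InS L S → InS L T → g (S ∪ T) = g S ∪ g T)
    (h0 : g ∅ = ∅) {ι : Type} [Finite ι] (F : ι → Set (Eval L))
    (h : ∀ i, InS L (F i)) : g (⋃ i, F i) = ⋃ i, g (F i) := by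
  rw [← Set.sUnion_range,
    g_sUnion hg_union h0 (Set.finite_range F) (by rintro S ⟨i, rfl⟩; exact h i),
    ← Set.range_comp, Set.sUnion_range]
  rfl

lemma g_iInter
    (hg_inter : ∀ S T : Set (Eval L), InS L S → InS L T → g (S ∩ T) = g S ∩ g T)
    (h1 : g Set.univ = Set.univ) {ι : Type} [Finite ι] (F : ι → Set (Eval L))
    (h : ∀ i, InS L (F i)) : g (⋂ i, F i) = ⋂ i, g (F i) := by
  rw [← Set.sInter_range,
    g_sInter hg_inter h1 (Set.finite_range F) (by rintro S ⟨i, rfl⟩; exact h i),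
    ← Set.range_comp, Set.sInter_range]
  rfl

lemma g_biUnion
    (hg_union : ∀ S T : Set (Eval L), InS L S → InS L T → g (S ∪ T) = g S ∪ g T)
    (h0 : g ∅ = ∅) {ι : Type} [Finite ι] (s : Set ι) (F : ι → Set (Eval L))
    (h : ∀ i, InS L (F i)) : g (⋃ i ∈ s, F i) = ⋃ i ∈ s, g (F i) := by
  have e1 : (⋃ i ∈ s, F i) = ⋃ i : s, F i.1 := Set.biUnion_eq_iUnion s (fun i _ => F i)
  have e2 : (⋃ i ∈ s, g (F i)) = ⋃ i : s, g (F i.1) :=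
    Set.biUnion_eq_iUnion s (fun i _ => g (F i))
  rw [e1, g_iUnion hg_union h0 (fun i : s => F i.1) (fun i => h i.1), e2]

lemma g_biInter
    (hg_inter : ∀ S T : Set (Eval L), InS L S → InS L T → g (S ∩ T) = g S ∩ g T)
    (h1 : g Set.univ = Set.univ) {ι : Type} [Finite ι] (s : Set ι) (F : ι → Set (Eval L))
    (h : ∀ i, InS L (F i)) : g (⋂ i ∈ s, F i) = ⋂ i ∈ s, g (F i) := by
  have e1 : (⋂ i ∈ s, F i) = ⋂ i : s, F i.1 := Set.biInter_eq_iInter s (fun i _ => F i)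
  have e2 : (⋂ i ∈ s, g (F i)) = ⋂ i : s, g (F i.1) :=
    Set.biInter_eq_iInter s (fun i _ => g (F i))
  rw [e1, g_iInter hg_inter h1 (fun i : s => F i.1) (fun i => h i.1), e2]

lemma key
    (hgι : ∀ d : Set L, IsLowerSet d → g (iota L d) = f.map ⁻¹' d)
    (hg_inter : ∀ S T : Set (Eval L), InS L S → InS L T → g (S ∩ T) = g S ∩ g T)
    (hg_union : ∀ S T : Set (Eval L), InS L S → InS L T → g (S ∪ T) = g S ∪ g T)
    (hg_himp : ∀ S T : Set (Eval L), InS L S → InS L T →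
      g (himpPt L S T) = himpD (g S) (g T)) :
    ∀ (n : ℕ) (u : Eval L),
      g (downSet L n u) = evalMap L f (downSet L n u) ∧
      g (upCo L n u) = evalMap L f (upCo L n u) := by
  intro n
  induction n with
  | zero =>
    intro u
    constructor
    · have hl : IsLowerSet {b | b ≤ u.rootVal} := fun a b hba ha => le_trans hba ha
      rw [downSet_zero_eq, hgι _ hl, evalMap_iota]
    · have hl : IsLowerSet {b | ¬ u.rootVal ≤ b} := fun a b hba ha hc => ha (hc.trans hba)
      rw [upCo_zero_eq, hgι _ hl, evalMap_iota]
  | succ n ih =>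
    intro u
    have h0 : g ∅ = ∅ := g_empty hgι
    have h1 : g Set.univ = Set.univ := g_univ hgι
    have hin1 : ∀ S : Set u.P.carrier,
        InS L (⋂ p ∈ S, upCo L n (u.restrict p)) :=
      fun S => InS_biInter S _ (fun p => InS_upCo n _)
    have hin2 : ∀ S : Set u.P.carrier,
        InS L (⋃ p ∈ Sᶜ, downSet L n (u.restrict p)) :=
      fun S => InS_biUnion Sᶜ _ (fun p => InS_downSet n _)
    constructor
    · rw [downSet_succ_eq, g_iInter hg_inter h1 _
        (fun S => InS_himp (hin1 S) (hin2 S)), evalMap_iInter]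
      refine Set.iInter_congr (fun S => ?_)
      rw [hg_himp _ _ (hin1 S) (hin2 S), evalMap_himp f (hin1 S) (hin2 S)]
      have e1 : g (⋂ p ∈ S, upCo L n (u.restrict p)) =
          evalMap L f (⋂ p ∈ S, upCo L n (u.restrict p)) := by
        rw [g_biInter hg_inter h1 S _ (fun p => InS_upCo n _), evalMap_biInter]
        exact Set.iInter₂_congr (fun p _ => (ih _).2)
      have e2 : g (⋃ p ∈ Sᶜ, downSet L n (u.restrict p)) =
          evalMap L f (⋃ p ∈ Sᶜ, downSet L n (u.restrict p)) := by
        rw [g_biUnion hg_union h0 Sᶜ _ (fun p => InS_downSet n _), evalMap_biUnion]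
        exact Set.iUnion₂_congr (fun p _ => (ih _).1)
      rw [e1, e2]
    · rw [upCo_succ_eq, g_iUnion hg_union h0 _
        (fun p => InS_himp (InS_downSet n _) (InS_upCo n _)), evalMap_iUnion]
      refine Set.iUnion_congr (fun p => ?_)
      rw [hg_himp _ _ (InS_downSet n _) (InS_upCo n _),
        evalMap_himp f (InS_downSet n _) (InS_upCo n _), (ih _).1, (ih _).2]

end Aux4
section Aux5

/-- Finite approximation types. -/
def TS (L : Type) : ℕ → Type
  | 0 => L
  | n+1 => L × Set (TS L n)

lemma TS_finite (L : Type) [Finite L] : ∀ n, Finite (TS L n)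
  | 0 => by unfold TS; infer_instance
  | n+1 => by
    have := TS_finite L n
    unfold TS
    infer_instance

variable {L : Type} [PartialOrder L]

/-- The `n`-type of an evaluation. -/
def typ : (n : ℕ) → Eval L → TS L n
  | 0, u => u.rootVal
  | n+1, u => (u.rootVal, {t | ∃ p, typ n (u.restrict p) = t})

lemma sim_of_typ_eq : ∀ (n : ℕ) {u v : Eval L}, typ n u = typ n v → sim L n u v
  | 0, u, v, h => h
  | n+1, u, v, h => by
    have hs : {t | ∃ p, typ n (u.restrict p) = t} =
        {t | ∃ q, typ n (v.restrict q) = t} := congrArg Prod.snd h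
    have hs' := Set.ext_iff.mp hs
    constructor
    · intro p
      obtain ⟨q, hq⟩ := (hs' (typ n (u.restrict p))).mp ⟨p, rfl⟩
      exact ⟨q, sim_of_typ_eq n hq.symm⟩
    · intro q
      obtain ⟨p, hp⟩ := (hs' (typ n (v.restrict q))).mpr ⟨q, rfl⟩
      exact ⟨p, sim_of_typ_eq n hp.symm⟩

end Aux5

/-- `ev_f` is the unique Heyting algebra homomorphism
`g : S(h_L) → D(M)` with `g ∘ ι_L = D(f)`. -/
theorem evalMap_unique (L : Type) [PartialOrder L] [Finite L] (f : Eval L)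
    (g : Set (Eval L) → Set f.P.carrier)
    (hgι : ∀ d : Set L, IsLowerSet d → g (iota L d) = f.map ⁻¹' d)
    (hg_inter : ∀ S T : Set (Eval L), InS L S → InS L T → g (S ∩ T) = g S ∩ g T)
    (hg_union : ∀ S T : Set (Eval L), InS L S → InS L T → g (S ∪ T) = g S ∪ g T)
    (hg_himp : ∀ S T : Set (Eval L), InS L S → InS L T →
      g (himpPt L S T) = himpD (g S) (g T)) :
    ∀ X : Set (Eval L), InS L X → g X = evalMap L f X := by
  intro X hX
  classical
  obtain ⟨hsub, n, hbi⟩ := hX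
  have hmem : ∀ Y ∈ (fun u => downSet L (n+1) u) '' X, InS L Y := by
    rintro Y ⟨u, -, rfl⟩; exact InS_downSet _ _
  have hXZ : X = ⋃₀ ((fun u => downSet L (n+1) u) '' X) := by
    apply Set.Subset.antisymm
    · intro u hu
      exact ⟨downSet L (n+1) u, ⟨u, hu, rfl⟩, lev_refl (n+1) u⟩
    · rintro v ⟨Y, ⟨u, hu, rfl⟩, hv⟩
      obtain ⟨p, hp⟩ := hv v.P.root
      have h1 : u.restrict p ∈ X := hsub u hu p
      have h2 : v.restrict v.P.root ∈ X := hbi _ h1 _ (sim_symm n hp)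
      exact hbi _ h2 _ (sim_symm n ((isoRestrictRoot v).sim n))
  have hfin : ((fun u => downSet L (n+1) u) '' X).Finite := by
    have : Finite (TS L (n+1)) := TS_finite L (n+1)
    refine Set.Finite.subset (Set.finite_range (fun t : TS L (n+1) =>
      ⋃₀ {Y | ∃ u : Eval L, typ (n+1) u = t ∧ Y = downSet L (n+1) u})) ?_
    rintro Y ⟨u, -, rfl⟩
    refine ⟨typ (n+1) u, ?_⟩
    apply Set.Subset.antisymm
    · rintro v ⟨Y', ⟨u', hu', rfl⟩, hv⟩
      exact lev_trans (n+1) hv (sim_iff_lev.mp (sim_of_typ_eq (n+1) hu')).1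
    · intro v hv
      exact ⟨downSet L (n+1) u, ⟨u, rfl, rfl⟩, hv⟩
  have hkey := key hgι hg_inter hg_union hg_himp
  rw [hXZ, g_sUnion hg_union (g_empty hgι) hfin hmem, evalMap_sUnion]
  have himg : g '' ((fun u => downSet L (n+1) u) '' X) =
      evalMap L f '' ((fun u => downSet L (n+1) u) '' X) := by
    apply Set.image_congr
    rintro Y ⟨u, -, rfl⟩
    exact (hkey (n+1) u).1
  rw [himg]
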